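/- arXiv:2011.07552 — 2 statements merged into one kernel-verified Lean document; each statement's English description precedes it below -/
import Mathlib

section
/- Let (m_x) be i.i.d. random variables with values in [m_min, m_max], 0 < m_min, and fix β₁,…,β_n > 0. For every n ≥ 2, all x, y ∈ {1,…,n}, and all nonnegative integers k, k' with k + k' < 2|x − y|, the random variables ⟨δ_x, (A_p^β)^k δ_x⟩ and ⟨δ_y, (A_p^β)^{k'} δ_y⟩ (where A_p^β is built from the random masses m₁,…,m_n) satisfy E[ ⟨δ_x,(A_p^β)^k δ_x⟩ · ⟨δ_y,(A_p^β)^{k'} δ_y⟩ ] = E[ ⟨δ_x,(A_p^β)^k δ_x⟩ ] · E[ ⟨δ_y,(A_p^β)^{k'} δ_y⟩ ]. -/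
open Matrix MeasureTheory ProbabilityTheory Filter

noncomputable section

/-- The discrete gradient `∇₋` (an `n × (n−1)` matrix, 0-indexed). -/
def nablaMinus (n : ℕ) : Matrix (Fin n) (Fin (n-1)) ℝ :=
  Matrix.of fun x y => if (x : ℕ) = (y : ℕ) then 1 else if (x : ℕ) = (y : ℕ) + 1 then -1 else 0

/-- The discrete gradient `∇₊ = −(∇₋)ᵀ`. -/
def nablaPlus (n : ℕ) : Matrix (Fin (n-1)) (Fin n) ℝ := -(nablaMinus n)ᵀ

/-- `M^{-1/2}` for the diagonal mass matrix. -/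
def invSqrtMass (n : ℕ) (m : Fin n → ℝ) : Matrix (Fin n) (Fin n) ℝ :=
  Matrix.diagonal fun x => 1 / Real.sqrt (m x)

/-- `M⁻¹`. -/
def massInv (n : ℕ) (m : Fin n → ℝ) : Matrix (Fin n) (Fin n) ℝ :=
  Matrix.diagonal fun x => (m x)⁻¹

/-- `A_p⁰ = M^{-1/2} (−Δ) M^{-1/2}` with `Δ = ∇₋∇₊`. -/
def Ap0 (n : ℕ) (m : Fin n → ℝ) : Matrix (Fin n) (Fin n) ℝ :=
  invSqrtMass n m * (-(nablaMinus n * nablaPlus n)) * invSqrtMass n m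

/-- `A_r⁰ = −∇₊ M⁻¹ ∇₋`. -/
def Ar0 (n : ℕ) (m : Fin n → ℝ) : Matrix (Fin (n-1)) (Fin (n-1)) ℝ :=
  -(nablaPlus n * massInv n m * nablaMinus n)

/-- `M_β^{-1/2} = diag(√(β_x/m_x))`. -/
def MbetaInvSqrt (n : ℕ) (m β : Fin n → ℝ) : Matrix (Fin n) (Fin n) ℝ :=
  Matrix.diagonal fun x => Real.sqrt (β x / m x)

/-- `M_β⁻¹ = diag(β_x/m_x)`. -/
def MbetaInv (n : ℕ) (m β : Fin n → ℝ) : Matrix (Fin n) (Fin n) ℝ :=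
  Matrix.diagonal fun x => β x / m x

/-- `β° = diag(β₁,…,β_{n−1})`. -/
def betaCirc (n : ℕ) (β : Fin n → ℝ) : Matrix (Fin (n-1)) (Fin (n-1)) ℝ :=
  Matrix.diagonal fun y => β (Fin.castLE (Nat.sub_le n 1) y)

/-- `(β°)^{1/2}`. -/
def betaCircSqrt (n : ℕ) (β : Fin n → ℝ) : Matrix (Fin (n-1)) (Fin (n-1)) ℝ :=
  Matrix.diagonal fun y => Real.sqrt (β (Fin.castLE (Nat.sub_le n 1) y))

/-- `A_p^β = M_β^{-1/2} (−∇₋ β° ∇₊) M_β^{-1/2}`. -/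
def ApBeta (n : ℕ) (m β : Fin n → ℝ) : Matrix (Fin n) (Fin n) ℝ :=
  MbetaInvSqrt n m β * (-(nablaMinus n * betaCirc n β * nablaPlus n)) * MbetaInvSqrt n m β

/-- `A_r^β = (β°)^{1/2} (−∇₊ M_β⁻¹ ∇₋) (β°)^{1/2}`. -/
def ArBeta (n : ℕ) (m β : Fin n → ℝ) : Matrix (Fin (n-1)) (Fin (n-1)) ℝ :=
  betaCircSqrt n β * (-(nablaPlus n * MbetaInv n m β * nablaMinus n)) * betaCircSqrt n β

/-- The function `𝔣(t) = √t coth √t` for `t > 0`, `𝔣(0) = 1`. -/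
def sqrtCoth (t : ℝ) : ℝ :=
  if t = 0 then 1 else Real.sqrt t * (Real.cosh (Real.sqrt t) / Real.sinh (Real.sqrt t))

/-- The (random) average thermal energy at site `x` (0-indexed; site `x+1` in the paper's
1-based convention), given masses `m` and local inverse temperatures `βv`.  The `A_r^β` term
is omitted at the last site. -/
def avgThermalEnergy (n : ℕ) (m βv : Fin n → ℝ) (x : Fin n) : ℝ :=
  (1 / βv x) *
    ((if h : (x : ℕ) < n - 1 then cfc sqrtCoth (ArBeta n m βv) ⟨(x : ℕ), h⟩ ⟨(x : ℕ), h⟩ else 0)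
      + cfc sqrtCoth (ApBeta n m βv) x x
      - (m x / βv x) / (∑ z, m z / βv z))

/-- The local inverse-temperature vector `β_x = β(x/n)` (1-based sites). -/
def betaVec (n : ℕ) (β : ℝ → ℝ) : Fin n → ℝ := fun x => β ((((x : ℕ) : ℝ) + 1) / n)

/-- Average thermal energy at site `x` built from a macroscopic temperature profile `β`. -/
def avgThermalProfile (n : ℕ) (β : ℝ → ℝ) (m : Fin n → ℝ) (x : Fin n) : ℝ :=
  avgThermalEnergy n m (betaVec n β) x

/-- The 0-based index in `Fin n` of the (1-based) site `max 1 k` (clamped to stay in range). -/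
def siteIdx (n : ℕ) (hn : 0 < n) (k : ℕ) : Fin n := ⟨min (max 1 k - 1) (n-1), by omega⟩

end

section Aux

lemma ApBeta_apply (n : ℕ) (m β : Fin n → ℝ) (u v : Fin n) :
    ApBeta n m β u v = Real.sqrt (β u / m u) *
      (-(nablaMinus n * betaCirc n β * nablaPlus n)) u v * Real.sqrt (β v / m v) := by
  unfold ApBeta MbetaInvSqrt
  rw [Matrix.mul_diagonal, Matrix.diagonal_mul]

lemma B_band (n : ℕ) (β : Fin n → ℝ) (u v : Fin n)
    (h : (u : ℕ) + 1 < (v : ℕ) ∨ (v : ℕ) + 1 < (u : ℕ)) :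
    (-(nablaMinus n * betaCirc n β * nablaPlus n)) u v = 0 := by
  rw [Matrix.neg_apply, Matrix.mul_apply, neg_eq_zero]
  apply Finset.sum_eq_zero
  intro z _
  rw [betaCirc, Matrix.mul_diagonal]
  simp only [nablaPlus, Matrix.neg_apply, Matrix.transpose_apply, nablaMinus, Matrix.of_apply]
  split_ifs <;> first | omega | ring

lemma ApBeta_band (n : ℕ) (m β : Fin n → ℝ) (u v : Fin n)
    (h : (u : ℕ) + 1 < (v : ℕ) ∨ (v : ℕ) + 1 < (u : ℕ)) :
    ApBeta n m β u v = 0 := by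
  rw [ApBeta_apply, B_band n β u v h, mul_zero, zero_mul]

lemma ApBeta_congr (n : ℕ) (m m' β : Fin n → ℝ) (u v : Fin n)
    (h1 : m u = m' u) (h2 : m v = m' v) :
    ApBeta n m β u v = ApBeta n m' β u v := by
  rw [ApBeta_apply, ApBeta_apply, h1, h2]

lemma pow_band {n : ℕ} (A : Matrix (Fin n) (Fin n) ℝ)
    (hA : ∀ u v : Fin n, (u : ℕ) + 1 < (v : ℕ) ∨ (v : ℕ) + 1 < (u : ℕ) → A u v = 0) :
    ∀ (k : ℕ) (u v : Fin n), (u : ℕ) + k < (v : ℕ) ∨ (v : ℕ) + k < (u : ℕ) → (A ^ k) u v = 0 := by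
  intro k
  induction k with
  | zero =>
    intro u v h
    rw [pow_zero, Matrix.one_apply_ne]
    intro hu; rw [hu] at h; omega
  | succ j ih =>
    intro u v h
    rw [pow_succ', Matrix.mul_apply]
    apply Finset.sum_eq_zero
    intro w _
    by_cases hb : (u : ℕ) + 1 < (w : ℕ) ∨ (w : ℕ) + 1 < (u : ℕ)
    · rw [hA u w hb, zero_mul]
    · rw [ih w v (by omega), mul_zero]

lemma pow_agree {n : ℕ} (A A' : Matrix (Fin n) (Fin n) ℝ) (x : Fin n) (R : ℕ)
    (hA : ∀ u v : Fin n, (u : ℕ) + 1 < (v : ℕ) ∨ (v : ℕ) + 1 < (u : ℕ) → A u v = 0)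
    (hA' : ∀ u v : Fin n, (u : ℕ) + 1 < (v : ℕ) ∨ (v : ℕ) + 1 < (u : ℕ) → A' u v = 0)
    (hag : ∀ u v : Fin n, (x : ℕ) ≤ (u : ℕ) + R → (u : ℕ) ≤ (x : ℕ) + R →
      (x : ℕ) ≤ (v : ℕ) + R → (v : ℕ) ≤ (x : ℕ) + R → A u v = A' u v) :
    ∀ (j : ℕ) (u : Fin n), (u : ℕ) + j ≤ (x : ℕ) + 2 * R + 1 →
      (x : ℕ) + j ≤ (u : ℕ) + 2 * R + 1 → (A ^ j) u x = (A' ^ j) u x := by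
  intro j
  induction j with
  | zero => intro u _ _; rw [pow_zero, pow_zero]
  | succ j ih =>
    intro u h1 h2
    rw [pow_succ', pow_succ', Matrix.mul_apply, Matrix.mul_apply]
    apply Finset.sum_congr rfl
    intro v _
    by_cases hb : (u : ℕ) + 1 < (v : ℕ) ∨ (v : ℕ) + 1 < (u : ℕ)
    · rw [hA u v hb, hA' u v hb, zero_mul, zero_mul]
    · by_cases hc : (v : ℕ) + j < (x : ℕ) ∨ (x : ℕ) + j < (v : ℕ)
      · rw [pow_band A hA j v x hc, pow_band A' hA' j v x hc, mul_zero, mul_zero]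
      · rw [hag u v (by omega) (by omega) (by omega) (by omega),
          ih v (by omega) (by omega)]

lemma meas_ApBeta (n : ℕ) (β : Fin n → ℝ) (u v : Fin n) :
    Measurable fun m : Fin n → ℝ => ApBeta n m β u v := by
  simp only [ApBeta_apply]
  exact ((Real.continuous_sqrt.measurable.comp
      (measurable_const.div (measurable_pi_apply u))).mul measurable_const).mul
    (Real.continuous_sqrt.measurable.comp (measurable_const.div (measurable_pi_apply v)))

lemma meas_pow (n : ℕ) (β : Fin n → ℝ) (k : ℕ) :
    ∀ u v : Fin n, Measurable fun m : Fin n → ℝ => ((ApBeta n m β) ^ k) u v := by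
  induction k with
  | zero => intro u v; simp only [pow_zero]; exact measurable_const
  | succ j ih =>
    intro u v
    simp only [pow_succ, Matrix.mul_apply]
    exact Finset.measurable_sum _ fun w _ => (ih u w).mul (meas_ApBeta n β w v)

end Aux

open Matrix MeasureTheory ProbabilityTheory in
/-- for i.i.d. masses and `k + k' < 2|x − y|`, the diagonal entries
`((A_p^β)^k)_{xx}` and `((A_p^β)^{k'})_{yy}` are uncorrelated (the expectation of their
product factorizes). -/
theorem stmt2 {Ω : Type*} [MeasurableSpace Ω] (μ : Measure Ω) [IsProbabilityMeasure μ]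
    (mass : ℕ → Ω → ℝ) (hmeas : ∀ i, Measurable (mass i))
    (hindep : iIndepFun mass μ)
    (hident : ∀ i j, IdentDistrib (mass i) (mass j) μ μ)
    (mmin mmax : ℝ) (h0 : 0 < mmin) (hmm : mmin ≤ mmax)
    (hrange : ∀ i ω, mass i ω ∈ Set.Icc mmin mmax)
    (n : ℕ) (hn : 2 ≤ n) (β : Fin n → ℝ) (hβ : ∀ x, 0 < β x)
    (x y : Fin n) (k k' : ℕ) (hkk' : (k : ℤ) + (k' : ℤ) < 2 * |(x : ℤ) - (y : ℤ)|) :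
    ∫ ω, (((ApBeta n (fun z => mass z ω) β) ^ k) x x)
        * (((ApBeta n (fun z => mass z ω) β) ^ k') y y) ∂μ
      = (∫ ω, ((ApBeta n (fun z => mass z ω) β) ^ k) x x ∂μ)
        * (∫ ω, ((ApBeta n (fun z => mass z ω) β) ^ k') y y ∂μ) := by
  classical
  set r : ℕ := k / 2 with hr
  set r' : ℕ := k' / 2 with hr'
  set Sx : Finset ℕ := Finset.Icc ((x : ℕ) - r) ((x : ℕ) + r) with hSx
  set Sy : Finset ℕ := Finset.Icc ((y : ℕ) - r') ((y : ℕ) + r') with hSy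
  have habs : (2 : ℤ) * |(x : ℤ) - (y : ℤ)| = 2 * ((x : ℤ) - y) ∨
      (2 : ℤ) * |(x : ℤ) - (y : ℤ)| = 2 * ((y : ℤ) - x) := by
    rcases abs_cases ((x : ℤ) - (y : ℤ)) with ⟨h, _⟩ | ⟨h, _⟩
    · left; rw [h]
    · right; rw [h]; ring
  have hdisj : Disjoint Sx Sy := by
    rw [Finset.disjoint_left]
    intro i hi hj
    rw [hSx, Finset.mem_Icc] at hi
    rw [hSy, Finset.mem_Icc] at hj
    rcases habs with h | h <;> rw [h] at hkk' <;> omega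
  -- the local extension maps
  set F1 : (∀ _ : Sx, ℝ) → ℝ := fun v =>
    ((ApBeta n (fun z : Fin n => if h : (z : ℕ) ∈ Sx then v ⟨(z : ℕ), h⟩ else 1) β) ^ k) x x
    with hF1
  set F2 : (∀ _ : Sy, ℝ) → ℝ := fun v =>
    ((ApBeta n (fun z : Fin n => if h : (z : ℕ) ∈ Sy then v ⟨(z : ℕ), h⟩ else 1) β) ^ k') y y
    with hF2
  have hext : ∀ (S : Finset ℕ) (ω : Ω) (z : Fin n), (z : ℕ) ∈ S →
      (if h : (z : ℕ) ∈ S then (fun i : S => mass i ω) ⟨(z : ℕ), h⟩ else 1) = mass z ω := by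
    intro S ω z hz
    rw [dif_pos hz]
  have hband : ∀ (m : Fin n → ℝ) (u v : Fin n),
      (u : ℕ) + 1 < (v : ℕ) ∨ (v : ℕ) + 1 < (u : ℕ) → ApBeta n m β u v = 0 :=
    fun m u v h => ApBeta_band n m β u v h
  have key : ∀ (S : Finset ℕ) (c : Fin n) (R : ℕ) (j : ℕ), S = Finset.Icc ((c : ℕ) - R) ((c : ℕ) + R) →
      j ≤ 2 * R + 1 → ∀ ω : Ω,
      ((ApBeta n (fun z : Fin n => if h : (z : ℕ) ∈ S then (fun i : S => mass i ω) ⟨(z : ℕ), h⟩ else 1) β) ^ j) c c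
        = ((ApBeta n (fun z => mass z ω) β) ^ j) c c := by
    intro S c R j hS hj ω
    apply pow_agree _ _ c R (hband _) (hband _) _ j c (by omega) (by omega)
    intro u v h1 h2 h3 h4
    apply ApBeta_congr
    · apply hext S ω u; rw [hS, Finset.mem_Icc]; omega
    · apply hext S ω v; rw [hS, Finset.mem_Icc]; omega
  have hX : ∀ ω : Ω, (F1 ∘ fun ω (i : Sx) => mass i ω) ω
      = ((ApBeta n (fun z => mass z ω) β) ^ k) x x := by
    intro ω
    exact key Sx x r k hSx (by omega) ω
  have hY : ∀ ω : Ω, (F2 ∘ fun ω (i : Sy) => mass i ω) ω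
      = ((ApBeta n (fun z => mass z ω) β) ^ k') y y := by
    intro ω
    exact key Sy y r' k' hSy (by omega) ω
  have hmF : ∀ (S : Finset ℕ) (c : Fin n) (j : ℕ), Measurable (fun v : (∀ _ : S, ℝ) =>
      ((ApBeta n (fun z : Fin n => if h : (z : ℕ) ∈ S then v ⟨(z : ℕ), h⟩ else 1) β) ^ j) c c) := by
    intro S c j
    apply (meas_pow n β j c c).comp
    apply measurable_pi_lambda
    intro z
    by_cases h : (z : ℕ) ∈ S
    · simp only [dif_pos h]; exact measurable_pi_apply _
    · simp only [dif_neg h]; exact measurable_const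
  have hIndep : IndepFun (F1 ∘ fun ω (i : Sx) => mass i ω) (F2 ∘ fun ω (i : Sy) => mass i ω) μ :=
    (hindep.indepFun_finset Sx Sy hdisj hmeas).comp (hmF Sx x k) (hmF Sy y k')
  have hmX : Measurable (F1 ∘ fun ω (i : Sx) => mass i ω) :=
    (hmF Sx x k).comp (measurable_pi_lambda _ fun i => hmeas i)
  have hmY : Measurable (F2 ∘ fun ω (i : Sy) => mass i ω) :=
    (hmF Sy y k').comp (measurable_pi_lambda _ fun i => hmeas i)
  have := hIndep.integral_mul_eq_mul_integral hmX.aestronglyMeasurable hmY.aestronglyMeasurable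
  calc ∫ ω, (((ApBeta n (fun z => mass z ω) β) ^ k) x x)
        * (((ApBeta n (fun z => mass z ω) β) ^ k') y y) ∂μ
      = ∫ ω, (F1 ∘ fun ω (i : Sx) => mass i ω) ω * (F2 ∘ fun ω (i : Sy) => mass i ω) ω ∂μ := by
        apply integral_congr_ae; filter_upwards with ω; rw [hX ω, hY ω]
    _ = (∫ ω, (F1 ∘ fun ω (i : Sx) => mass i ω) ω ∂μ)
        * (∫ ω, (F2 ∘ fun ω (i : Sy) => mass i ω) ω ∂μ) := this
    _ = _ := by
        congr 1 <;> apply integral_congr_ae <;> filter_upwards with ω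
        · rw [hX ω]
        · rw [hY ω]
end

section
/- Fix 0 < η < 1 and 0 < m_min ≤ m_max < ∞. There exist a constant c > 0 and an integer N, depending only on η, m_min, m_max, such that for every n ≥ N the following holds. Let m ∈ [m_min, m_max]ⁿ, let φ ∈ ℝⁿ be a unit eigenvector of A_p⁰ = M^{−1/2}(−Δ)M^{−1/2} with eigenvalue ω² (ω ≥ 0), and set φ̃ = M^{−1/2}φ. Suppose there is a set of consecutive integers J ⊆ {0,1,…,n} with |J| ≤ 2n^η such that |φ̃_x| ≤ n^{−1/η} for every x ∈ {1,…,n} with x ∉ J. Then ω > 0 and 1/ω ≤ c·n^{3η/2}; moreover, for every x ∈ {1,…,n−1} with x ∉ J and x+1 ∉ J, the unit eigenvector φ^r := ω^{−1}·∇₊φ̃ of A_r⁰ = −∇₊M^{−1}∇₋ satisfies |φ^r_x| ≤ 2c·n^{−1/η + 3η/2}. -/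
open Matrix MeasureTheory ProbabilityTheory Filter

lemma nablaPlus_mulVec_apply (n : ℕ) (v : Fin n → ℝ) (y : Fin (n-1))
    (h1 : (y:ℕ) < n) (h2 : (y:ℕ)+1 < n) :
    (nablaPlus n).mulVec v y = v ⟨(y:ℕ)+1, h2⟩ - v ⟨(y:ℕ), h1⟩ := by
  have key : ∀ x : Fin n, (nablaPlus n) y x * v x
      = (if x = (⟨(y:ℕ)+1, h2⟩ : Fin n) then v x else 0)
      - (if x = (⟨(y:ℕ), h1⟩ : Fin n) then v x else 0) := by
    intro x
    simp only [nablaPlus, nablaMinus, Matrix.neg_apply, Matrix.transpose_apply, Matrix.of_apply,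
      Fin.ext_iff]
    split_ifs <;> simp_all
  simp only [Matrix.mulVec, dotProduct]
  rw [Finset.sum_congr rfl (fun x _ => key x), Finset.sum_sub_distrib,
    Finset.sum_ite_eq', Finset.sum_ite_eq']
  simp

open Matrix in
/-- if a unit eigenvector of `A_p⁰` is localized (small off an interval `J` of
length `≤ 2n^η`), then its eigenvalue satisfies `1/ω ≤ c n^{3η/2}` and the corresponding
eigenvector `ω⁻¹ ∇₊ M^{-1/2} φ` of `A_r⁰` is small off (the interior of) `J`. -/
theorem stmt10 (η mmin mmax : ℝ) (hη : 0 < η) (hη1 : η < 1)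
    (h0 : 0 < mmin) (hmm : mmin ≤ mmax) :
    ∃ c : ℝ, 0 < c ∧ ∃ N : ℕ, ∀ n : ℕ, N ≤ n →
      ∀ m : Fin n → ℝ, (∀ x, m x ∈ Set.Icc mmin mmax) →
      ∀ (φ : Fin n → ℝ) (ω : ℝ), 0 ≤ ω →
        (Ap0 n m).mulVec φ = (ω ^ 2) • φ → φ ⬝ᵥ φ = 1 →
      ∀ J : Finset ℕ, J ⊆ Finset.range (n + 1) →
        (∀ i j k : ℕ, i ∈ J → k ∈ J → i ≤ j → j ≤ k → j ∈ J) →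
        (J.card : ℝ) ≤ 2 * (n : ℝ) ^ η →
        (∀ x : Fin n, ((x : ℕ) + 1) ∉ J →
          |((invSqrtMass n m).mulVec φ) x| ≤ (n : ℝ) ^ (-1 / η)) →
        0 < ω ∧ 1 / ω ≤ c * (n : ℝ) ^ (3 * η / 2) ∧
        ∀ x : Fin (n - 1), ((x : ℕ) + 1) ∉ J → ((x : ℕ) + 2) ∉ J →
          |(ω⁻¹ • (nablaPlus n).mulVec ((invSqrtMass n m).mulVec φ)) x|
            ≤ 2 * c * (n : ℝ) ^ (-1 / η + 3 * η / 2) := by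
  have hmmax : 0 < mmax := lt_of_lt_of_le h0 hmm
  have hsq : 0 < Real.sqrt mmax := Real.sqrt_pos.2 hmmax
  refine ⟨8 * Real.sqrt mmax, by positivity, ?_⟩
  set c : ℝ := 8 * Real.sqrt mmax with hcdef
  have hcpos : 0 < c := by positivity
  -- eventual conditions
  have hcast : Tendsto (fun n : ℕ => (n : ℝ)) atTop atTop := tendsto_natCast_atTop_atTop
  have hev1 : ∀ᶠ (n:ℕ) in atTop, mmax * (n:ℝ)^(1 - 2/η) ≤ 1/4 := by
    have h : Tendsto (fun n : ℕ => mmax * (n:ℝ)^(1 - 2/η)) atTop (nhds (mmax * 0)) := by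
      refine Tendsto.const_mul _ ?_
      have : (1 - 2/η) = -(2/η - 1) := by ring
      rw [this]
      exact (tendsto_rpow_neg_atTop (by
        have : 1 < 2/η := by
          rw [lt_div_iff₀ hη]; linarith
        linarith)).comp hcast
    rw [mul_zero] at h
    exact (h.eventually_le_const (by norm_num))
  have hev2 : ∀ᶠ (n:ℕ) in atTop, 4 * Real.sqrt mmax ≤ (n:ℝ)^(1/η - η/2) := by
    have hpos : 0 < 1/η - η/2 := by
      have h1 : 1 < 1/η := by rw [lt_div_iff₀ hη]; linarith
      nlinarith
    exact ((tendsto_rpow_atTop hpos).comp hcast).eventually_ge_atTop _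
  have hev3 : ∀ᶠ (n:ℕ) in atTop, 4*(n:ℝ)^η + 2 ≤ (n:ℝ) := by
    have hA : ∀ᶠ (n:ℕ) in atTop, (n:ℝ)^(η - 1) ≤ 1/8 := by
      have h : Tendsto (fun n : ℕ => (n:ℝ)^(η - 1)) atTop (nhds 0) := by
        have : (η - 1) = -(1 - η) := by ring
        rw [this]
        exact (tendsto_rpow_neg_atTop (by linarith)).comp hcast
      exact h.eventually_le_const (by norm_num)
    have hB : ∀ᶠ (n:ℕ) in atTop, (4:ℝ) ≤ (n:ℝ) := hcast.eventually_ge_atTop 4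
    filter_upwards [hA, hB] with n hA hB
    have hnpos : (0:ℝ) < n := by linarith
    have h1 : (n:ℝ)^η = (n:ℝ)^(η-1) * (n:ℝ) := by
      have h := Real.rpow_add hnpos (η-1) 1
      rw [Real.rpow_one] at h
      rw [← h]
      congr 1
      ring
    have h2 : 4*(n:ℝ)^η ≤ (n:ℝ)/2 := by
      rw [h1]
      nlinarith [Real.rpow_nonneg (le_of_lt hnpos) (η-1)]
    linarith
  have hev4 : ∀ᶠ (n:ℕ) in atTop, 2 ≤ n := eventually_ge_atTop 2
  obtain ⟨N, hN⟩ := eventually_atTop.1 (((hev1.and hev2).and (hev3.and hev4)))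
  refine ⟨N, ?_⟩
  intro n hn m hm φ ω hω hφeig hunit J hJr hJconv hJcard hsmall
  obtain ⟨⟨h1, h2⟩, h3, h4⟩ := hN n hn
  have hnpos : (0:ℝ) < n := by
    have : 0 < n := by omega
    exact_mod_cast this
  -- basic mass facts
  have hm0 : ∀ x, 0 < m x := fun x => lt_of_lt_of_le h0 (hm x).1
  have hms : ∀ x, 0 < Real.sqrt (m x) := fun x => Real.sqrt_pos.2 (hm0 x)
  set φt : Fin n → ℝ := fun x => φ x / Real.sqrt (m x) with hφtdef
  have hSφ : (invSqrtMass n m).mulVec φ = φt := by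
    funext x
    simp [invSqrtMass, Matrix.mulVec_diagonal, hφtdef, div_eq_mul_inv, mul_comm]
  set g : Fin (n-1) → ℝ := (nablaPlus n).mulVec φt with hgdef
  -- the eigen-equation, pointwise
  have heig : ∀ x : Fin n, ((-(nablaMinus n * nablaPlus n)) *ᵥ φt) x
      = ω^2 * (Real.sqrt (m x) * φ x) := by
    intro x
    have h := congrFun hφeig x
    rw [Ap0] at h
    rw [← Matrix.mulVec_mulVec, ← Matrix.mulVec_mulVec, hSφ] at h
    rw [show ((invSqrtMass n m) *ᵥ ((-(nablaMinus n * nablaPlus n)) *ᵥ φt)) x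
        = (1 / Real.sqrt (m x)) * ((-(nablaMinus n * nablaPlus n)) *ᵥ φt) x from
      Matrix.mulVec_diagonal _ _ x] at h
    have hne : Real.sqrt (m x) ≠ 0 := ne_of_gt (hms x)
    rw [Pi.smul_apply, smul_eq_mul] at h
    field_simp at h
    linarith [h]
  -- ‖g‖² = ω²
  have hgg : ∑ y, g y ^ 2 = ω ^ 2 := by
    have e0 : ∑ y, g y ^ 2 = g ⬝ᵥ g := by
      simp [dotProduct, pow_two]
    have e1 : g ⬝ᵥ g = (g ᵥ* nablaPlus n) ⬝ᵥ φt := by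
      rw [hgdef, Matrix.dotProduct_mulVec]
    have e2 : g ᵥ* nablaPlus n = (-(nablaMinus n * nablaPlus n)) *ᵥ φt := by
      calc g ᵥ* nablaPlus n = g ᵥ* (-(nablaMinus n)ᵀ) := rfl
        _ = -(nablaMinus n *ᵥ g) := by rw [Matrix.vecMul_neg, Matrix.vecMul_transpose]
        _ = -(nablaMinus n *ᵥ (nablaPlus n *ᵥ φt)) := by rw [hgdef]
        _ = (-(nablaMinus n * nablaPlus n)) *ᵥ φt := by
            rw [Matrix.mulVec_mulVec, Matrix.neg_mulVec]
    rw [e0, e1, e2]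
    have : ∀ x, ((-(nablaMinus n * nablaPlus n)) *ᵥ φt) x * φt x = ω^2 * φ x ^ 2 := by
      intro x
      rw [heig x, hφtdef]
      have hne : Real.sqrt (m x) ≠ 0 := ne_of_gt (hms x)
      field_simp
    rw [dotProduct, Finset.sum_congr rfl (fun x _ => this x), ← Finset.mul_sum]
    have : ∑ x, φ x ^ 2 = 1 := by
      rw [← hunit]; simp [dotProduct, pow_two]
    rw [this, mul_one]
  -- each |g y| ≤ ω
  have hgabs : ∀ y, |g y| ≤ ω := by
    intro y
    have h1 : g y ^ 2 ≤ ω ^ 2 := by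
      rw [← hgg]
      exact Finset.single_le_sum (fun i _ => sq_nonneg (g i)) (Finset.mem_univ y)
    calc |g y| = Real.sqrt (g y ^ 2) := (Real.sqrt_sq_eq_abs _).symm
      _ ≤ Real.sqrt (ω ^ 2) := Real.sqrt_le_sqrt h1
      _ = ω := Real.sqrt_sq hω
  -- g in terms of φt
  have hgapp : ∀ (y : Fin (n-1)) (ha : (y:ℕ) < n) (hb : (y:ℕ)+1 < n),
      g y = φt ⟨(y:ℕ)+1, hb⟩ - φt ⟨(y:ℕ), ha⟩ := by
    intro y ha hb
    rw [hgdef]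
    exact nablaPlus_mulVec_apply n φt y ha hb
  -- telescoping
  have htel : ∀ (k a : ℕ) (ha : a < n) (hk : a + k < n),
      |φt ⟨a+k, hk⟩ - φt ⟨a, ha⟩| ≤ k * ω := by
    intro k
    induction k with
    | zero => intro a ha hk; simp
    | succ k ih =>
      intro a ha hk
      have hk' : a + k < n := by omega
      have hy : a + k < n - 1 := by omega
      have step : |φt ⟨a+k+1, by omega⟩ - φt ⟨a+k, hk'⟩| ≤ ω := by
        have hg1 := hgapp ⟨a+k, hy⟩ (by simpa using hk') (by omega)
        have := hgabs ⟨a+k, hy⟩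
        rw [hg1] at this
        simpa using this
      calc |φt ⟨a+(k+1), hk⟩ - φt ⟨a, ha⟩|
          ≤ |φt ⟨a+(k+1), hk⟩ - φt ⟨a+k, hk'⟩| + |φt ⟨a+k, hk'⟩ - φt ⟨a, ha⟩| :=
            abs_sub_le _ _ _
        _ ≤ ω + k * ω := by
            refine add_le_add ?_ (ih a ha hk')
            exact step
        _ = (k+1 : ℕ) * ω := by push_cast; ring
  -- normalization
  have hsum1 : ∑ x, m x * φt x ^ 2 = 1 := by
    have : ∀ x, m x * φt x ^ 2 = φ x ^ 2 := by
      intro x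
      have h1 : Real.sqrt (m x) ^ 2 = m x := Real.sq_sqrt (le_of_lt (hm0 x))
      simp only [hφtdef, div_pow]
      rw [h1]
      rw [mul_div_assoc'] ; rw [mul_comm (m x) (φ x ^ 2), mul_div_assoc (φ x ^ 2), div_self (ne_of_gt (hm0 x)), mul_one]
    rw [Finset.sum_congr rfl (fun x _ => this x), ← hunit]
    simp [dotProduct, pow_two]
  -- positivity facts about powers of n
  have hnη : (0:ℝ) < (n:ℝ)^η := Real.rpow_pos_of_pos hnpos η
  set t : ℝ := (n:ℝ)^(-(η/2)) / (2 * Real.sqrt mmax) with htdef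
  have htpos : 0 < t := by
    apply div_pos (Real.rpow_pos_of_pos hnpos _)
    positivity
  have ht2 : t^2 = (n:ℝ)^(-η) / (4 * mmax) := by
    rw [htdef, div_pow, mul_pow, Real.sq_sqrt (le_of_lt hmmax),
      ← Real.rpow_natCast ((n:ℝ)^(-(η/2))) 2, ← Real.rpow_mul (le_of_lt hnpos)]
    norm_num
  -- existence of a localized big site
  have hx0 : ∃ x0 : Fin n, ((x0:ℕ)+1) ∈ J ∧ t ≤ |φt x0| := by
    by_contra hcon
    push_neg at hcon
    set S : Finset (Fin n) := Finset.univ.filter (fun x : Fin n => ((x:ℕ)+1) ∈ J) with hSdef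
    have hScard : S.card ≤ J.card := by
      apply Finset.card_le_card_of_injOn (fun x : Fin n => (x:ℕ)+1)
      · intro x hx
        have hx' : x ∈ S := hx
        rw [hSdef, Finset.mem_filter] at hx'
        exact hx'.2
      · intro a _ b _ hab
        have hab' : (a:ℕ)+1 = (b:ℕ)+1 := hab
        exact Fin.ext (by omega)
    have hbound1 : ∀ x ∈ S, m x * φt x ^ 2 ≤ mmax * t^2 := by
      intro x hx
      rw [hSdef, Finset.mem_filter] at hx
      have h := hcon x hx.2
      have h2' : φt x ^ 2 ≤ t ^ 2 := by
        rw [← sq_abs]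
        exact pow_le_pow_left₀ (abs_nonneg _) (le_of_lt h) 2
      exact mul_le_mul (hm x).2 h2' (sq_nonneg _) (le_of_lt hmmax)
    have hbound2 : ∀ x ∈ Finset.univ.filter (fun x : Fin n => ¬ (((x:ℕ)+1) ∈ J)),
        m x * φt x ^ 2 ≤ mmax * (n:ℝ)^(-(2/η)) := by
      intro x hx
      rw [Finset.mem_filter] at hx
      have h := hsmall x hx.2
      rw [hSφ] at h
      have h2' : φt x ^ 2 ≤ (n:ℝ)^(-(2/η)) := by
        rw [← sq_abs]
        calc |φt x| ^ 2 ≤ ((n:ℝ)^(-1/η))^2 := pow_le_pow_left₀ (abs_nonneg _) h 2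
          _ = (n:ℝ)^(-(2/η)) := by
              rw [← Real.rpow_natCast ((n:ℝ)^(-1/η)) 2, ← Real.rpow_mul (le_of_lt hnpos)]
              congr 1
              push_cast
              ring
      exact mul_le_mul (hm x).2 h2' (sq_nonneg _) (le_of_lt hmmax)
    have hsplit := Finset.sum_filter_add_sum_filter_not Finset.univ
      (fun x : Fin n => ((x:ℕ)+1) ∈ J) (fun x => m x * φt x ^ 2)
    have hS1 : ∑ x ∈ S, m x * φt x ^ 2 ≤ 1/2 := by
      calc ∑ x ∈ S, m x * φt x ^ 2 ≤ ∑ _x ∈ S, (mmax * t^2) := Finset.sum_le_sum hbound1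
        _ = S.card * (mmax * t^2) := by rw [Finset.sum_const, nsmul_eq_mul]
        _ ≤ (2 * (n:ℝ)^η) * (mmax * t^2) := by
            apply mul_le_mul_of_nonneg_right _ (by positivity)
            exact le_trans (Nat.cast_le.2 hScard) hJcard
        _ = 1/2 := by
            rw [ht2]
            have hηη : (n:ℝ)^η * (n:ℝ)^(-η) = 1 := by
              rw [← Real.rpow_add hnpos]; simp
            field_simp
            linear_combination 4*hηη
    have hS2 : ∑ x ∈ Finset.univ.filter (fun x : Fin n => ¬ (((x:ℕ)+1) ∈ J)),
        m x * φt x ^ 2 ≤ 1/4 := by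
      calc ∑ x ∈ Finset.univ.filter (fun x : Fin n => ¬ (((x:ℕ)+1) ∈ J)), m x * φt x ^ 2
          ≤ ∑ _x ∈ Finset.univ.filter (fun x : Fin n => ¬ (((x:ℕ)+1) ∈ J)),
            (mmax * (n:ℝ)^(-(2/η))) := Finset.sum_le_sum hbound2
        _ = (Finset.univ.filter (fun x : Fin n => ¬ (((x:ℕ)+1) ∈ J))).card
            * (mmax * (n:ℝ)^(-(2/η))) := by rw [Finset.sum_const, nsmul_eq_mul]
        _ ≤ (n:ℝ) * (mmax * (n:ℝ)^(-(2/η))) := by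
            apply mul_le_mul_of_nonneg_right _ (by positivity)
            have : (Finset.univ.filter (fun x : Fin n => ¬ (((x:ℕ)+1) ∈ J))).card ≤ n := by
              calc _ ≤ Finset.univ.card := Finset.card_filter_le _ _
                _ = n := by simp
            exact_mod_cast this
        _ = mmax * (n:ℝ)^(1 - 2/η) := by
            have heq : (n:ℝ)^(1 - 2/η) = (n:ℝ)^(1:ℝ) * (n:ℝ)^(-(2/η)) := by
              rw [← Real.rpow_add hnpos]
              congr 1
            rw [heq, Real.rpow_one]
            ring
        _ ≤ 1/4 := h1
    have := hsum1
    rw [← hsplit] at this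
    linarith
  obtain ⟨x0, hx0J, hx0big⟩ := hx0
  set d : ℕ := J.card with hddef
  have hd1 : 1 ≤ d := Finset.card_pos.2 ⟨_, hx0J⟩
  have hs0n : (x0:ℕ)+1 ≤ n := x0.isLt
  have hdn : 2*d + 2 ≤ n := by
    have hd : (d:ℝ) ≤ 2*(n:ℝ)^η := hJcard
    have : ((2*d + 2 : ℕ) : ℝ) ≤ (n:ℝ) := by push_cast; linarith
    exact_mod_cast this
  have hexit : ∃ xe : Fin n, ((xe:ℕ)+1) ∉ J ∧ |φt x0 - φt xe| ≤ (d:ℝ) * ω := by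
    by_cases hcase : (x0:ℕ)+1 + d ≤ n
    · have hj : ∃ j, 1 ≤ j ∧ j ≤ d ∧ ((x0:ℕ)+1+j) ∉ J := by
        by_contra hc
        push_neg at hc
        have hcard := Finset.card_le_card_of_injOn (fun j => (x0:ℕ)+1+j)
          (s := Finset.range (d+1)) (t := J) ?_ ?_
        · rw [Finset.card_range] at hcard; omega
        · intro j hjmem
          simp only [Finset.coe_range, Set.mem_Iio] at hjmem
          rcases Nat.eq_zero_or_pos j with rfl | hj1
          · simpa using hx0J
          · exact hc j hj1 (by omega)
        · intro a ha b hb hab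
          have hab' : (x0:ℕ)+1+a = (x0:ℕ)+1+b := hab
          omega
      obtain ⟨j, hj1, hjd, hjJ⟩ := hj
      have hlt : (x0:ℕ) + j < n := by omega
      refine ⟨⟨(x0:ℕ)+j, hlt⟩, ?_, ?_⟩
      · show ((x0:ℕ)+j)+1 ∉ J
        rw [show ((x0:ℕ)+j)+1 = (x0:ℕ)+1+j by omega]
        exact hjJ
      · have htl := htel j (x0:ℕ) x0.isLt hlt
        have hx0e : (⟨(x0:ℕ), x0.isLt⟩ : Fin n) = x0 := rfl
        rw [hx0e] at htl
        rw [abs_sub_comm] at htl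
        calc |φt x0 - φt ⟨(x0:ℕ)+j, hlt⟩| ≤ (j:ℝ) * ω := htl
          _ ≤ (d:ℝ) * ω := by
              apply mul_le_mul_of_nonneg_right _ hω
              exact_mod_cast hjd
    · push_neg at hcase
      have hs0big : d < (x0:ℕ)+1 := by omega
      have hj : ∃ j, 1 ≤ j ∧ j ≤ d ∧ ((x0:ℕ)+1-j) ∉ J := by
        by_contra hc
        push_neg at hc
        have hcard := Finset.card_le_card_of_injOn (fun j => (x0:ℕ)+1-j)
          (s := Finset.range (d+1)) (t := J) ?_ ?_
        · rw [Finset.card_range] at hcard; omega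
        · intro j hjmem
          simp only [Finset.coe_range, Set.mem_Iio] at hjmem
          rcases Nat.eq_zero_or_pos j with rfl | hj1
          · simpa using hx0J
          · exact hc j hj1 (by omega)
        · intro a ha b hb hab
          simp only [Finset.coe_range, Set.mem_Iio] at ha hb
          have hab' : (x0:ℕ)+1-a = (x0:ℕ)+1-b := hab
          omega
      obtain ⟨j, hj1, hjd, hjJ⟩ := hj
      have hlt : (x0:ℕ)+1-j-1 < n := by omega
      have hlt2 : ((x0:ℕ)+1-j-1) + j < n := by omega
      refine ⟨⟨(x0:ℕ)+1-j-1, hlt⟩, ?_, ?_⟩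
      · show ((x0:ℕ)+1-j-1)+1 ∉ J
        rw [show ((x0:ℕ)+1-j-1)+1 = (x0:ℕ)+1-j by omega]
        exact hjJ
      · have htl := htel j ((x0:ℕ)+1-j-1) hlt hlt2
        have hx0e : (⟨((x0:ℕ)+1-j-1) + j, hlt2⟩ : Fin n) = x0 := Fin.ext (by simp; omega)
        rw [hx0e] at htl
        calc |φt x0 - φt ⟨(x0:ℕ)+1-j-1, hlt⟩| ≤ (j:ℝ) * ω := htl
          _ ≤ (d:ℝ) * ω := by
              apply mul_le_mul_of_nonneg_right _ hω
              exact_mod_cast hjd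
  obtain ⟨xe, hxeJ, hxedist⟩ := hexit
  have hxesmall : |φt xe| ≤ (n:ℝ)^(-1/η) := by
    have := hsmall xe hxeJ
    rwa [hSφ] at this
  have hdist : |φt x0 - φt xe| ≤ 2*(n:ℝ)^η * ω :=
    le_trans hxedist (mul_le_mul_of_nonneg_right hJcard hω)
  have hchain : t ≤ (n:ℝ)^(-1/η) + 2*(n:ℝ)^η * ω := by
    have habs : |φt x0| ≤ |φt xe| + |φt x0 - φt xe| := by
      calc |φt x0| = |φt xe + (φt x0 - φt xe)| := by ring_nf
        _ ≤ |φt xe| + |φt x0 - φt xe| := abs_add_le _ _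
    linarith [hx0big]
  have hhalf : (n:ℝ)^(-1/η) ≤ t/2 := by
    have hmul := mul_le_mul_of_nonneg_right h2
      (le_of_lt (Real.rpow_pos_of_pos hnpos (-1/η)))
    rw [← Real.rpow_add hnpos] at hmul
    rw [show (1/η - η/2 + -1/η : ℝ) = -(η/2) by ring] at hmul
    have ht2' : t/2 = (n:ℝ)^(-(η/2)) / (4 * Real.sqrt mmax) := by
      rw [htdef]; ring
    rw [ht2', le_div_iff₀ (by positivity)]
    linarith [hmul]
  have hω2 : t/2 ≤ 2*(n:ℝ)^η * ω := by linarith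
  have hωlb : (n:ℝ)^(-(3*η/2))/c ≤ ω := by
    have hstep : (t/2)/(2*(n:ℝ)^η) ≤ ω := (div_le_iff₀ (by positivity)).2 (by linarith)
    have heq1 : (n:ℝ)^(-(3*η/2))/c = (t/2)/(2*(n:ℝ)^η) := by
      have hsplit2 : (n:ℝ)^(-(3*η/2)) = (n:ℝ)^(-(η/2)) * (n:ℝ)^(-η) := by
        rw [← Real.rpow_add hnpos]
        congr 1
        ring
      have hninv : (n:ℝ)^(-η) = ((n:ℝ)^η)⁻¹ := Real.rpow_neg (le_of_lt hnpos) η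
      rw [hsplit2, hninv, htdef, hcdef]
      rw [div_eq_div_iff (by positivity) (by positivity)]
      field_simp
      ring
    rw [heq1]
    exact hstep
  have hωpos : 0 < ω := lt_of_lt_of_le (by positivity) hωlb
  have hinv : 1/ω ≤ c * (n:ℝ)^(3*η/2) := by
    calc 1/ω ≤ 1/((n:ℝ)^(-(3*η/2))/c) := one_div_le_one_div_of_le (by positivity) hωlb
      _ = c * (n:ℝ)^(3*η/2) := by
          rw [one_div_div, Real.rpow_neg (le_of_lt hnpos), div_eq_mul_inv, inv_inv]
  refine ⟨hωpos, hinv, ?_⟩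
  intro x hx1 hx2
  have hxlt := x.isLt
  have hxa : (x:ℕ) < n := by omega
  have hxb : (x:ℕ)+1 < n := by omega
  rw [hSφ]
  have hgx := hgapp x hxa hxb
  have hs1 : |φt ⟨(x:ℕ), hxa⟩| ≤ (n:ℝ)^(-1/η) := by
    have := hsmall ⟨(x:ℕ), hxa⟩ hx1
    rwa [hSφ] at this
  have hs2 : |φt ⟨(x:ℕ)+1, hxb⟩| ≤ (n:ℝ)^(-1/η) := by
    have := hsmall ⟨(x:ℕ)+1, hxb⟩ hx2
    rwa [hSφ] at this
  have hgbnd : |g x| ≤ 2*(n:ℝ)^(-1/η) := by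
    rw [hgx]
    calc |φt ⟨(x:ℕ)+1, hxb⟩ - φt ⟨(x:ℕ), hxa⟩|
        ≤ |φt ⟨(x:ℕ)+1, hxb⟩| + |φt ⟨(x:ℕ), hxa⟩| := abs_sub _ _
      _ ≤ 2*(n:ℝ)^(-1/η) := by linarith
  calc |(ω⁻¹ • (nablaPlus n *ᵥ φt)) x| = ω⁻¹ * |g x| := by
        rw [Pi.smul_apply, smul_eq_mul, abs_mul, abs_of_pos (inv_pos.2 hωpos), hgdef]
    _ ≤ (1/ω) * (2*(n:ℝ)^(-1/η)) := by
        rw [one_div]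
        exact mul_le_mul_of_nonneg_left hgbnd (le_of_lt (inv_pos.2 hωpos))
    _ ≤ (c * (n:ℝ)^(3*η/2)) * (2*(n:ℝ)^(-1/η)) := by
        apply mul_le_mul_of_nonneg_right hinv (by positivity)
    _ = 2 * c * (n:ℝ)^(-1/η + 3*η/2) := by
        rw [Real.rpow_add hnpos]
        ring
end
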